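/- Let X be a finite nonempty set and let T be a finite simplicial complex whose vertex set is X (i.e., {x} ∈ T for every x ∈ X). Then T is the K-complex of some partial order ≤ on X if and only if for every maximal simplex s of T there exists y ∈ s such that y ∉ s' for every maximal simplex s' of T with s' ≠ s. -/

import Mathlib

/-- Let `X` be a finite nonempty set and `T` a simplicial complex with vertex
set `X`. Then `T` is the K-complex of some partial order on `X` if and only if every maximal
simplex of `T` has an element belonging to no other maximal simplex. -/
theorem stmt_11 {X : Type} [Fintype X] [Nonempty X] (T : Set (Finset X))
    (h_ne : ∀ s ∈ T, Finset.Nonempty s)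
    (h_down : ∀ s ∈ T, ∀ t : Finset X, t ⊆ s → t.Nonempty → t ∈ T)
    (h_vert : ∀ x : X, {x} ∈ T) :
    (∃ r : X → X → Prop, IsPartialOrder X r ∧
        T = {s : Finset X | s.Nonempty ∧ ∃ y : X, ∀ x ∈ s, r x y}) ↔
      ∀ s : Finset X, s ∈ T → (∀ s' ∈ T, s ⊆ s' → s' = s) →
        ∃ y ∈ s, ∀ s' : Finset X, s' ∈ T → (∀ s'' ∈ T, s' ⊆ s'' → s'' = s') → s' ≠ s →
          y ∉ s' := by
  classical
  -- every simplex is contained in a maximal simplex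
  have hmax_ext : ∀ t ∈ T, ∃ s ∈ T, t ⊆ s ∧ ∀ s' ∈ T, s ⊆ s' → s' = s := by
    intro t ht
    obtain ⟨m, ⟨hmT, htm⟩, hm⟩ :=
      Set.Finite.exists_maximalFor (id : Finset X → Finset X)
        {s : Finset X | s ∈ T ∧ t ⊆ s} (Set.toFinite _) ⟨t, ht, subset_rfl⟩
    exact ⟨m, hmT, htm, fun s' hs' hms' => Finset.Subset.antisymm (hm ⟨hs', htm.trans hms'⟩ hms') hms'⟩
  constructor
  · rintro ⟨r, hr, hT⟩ s hs hsmax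
    letI P : PartialOrder X :=
      { le := r
        le_refl := hr.refl
        le_trans := fun a b c hab hbc => hr.trans a b c hab hbc
        le_antisymm := fun a b hab hba => hr.antisymm a b hab hba }
    rw [hT] at hs
    obtain ⟨hsne, y, hy⟩ := hs
    -- pick m maximal above y
    obtain ⟨m, hym, hm⟩ :=
      Set.Finite.exists_maximalFor (id : X → X) {z : X | r y z} (Set.toFinite _)
        ⟨y, hr.refl y⟩
    have hmmax : ∀ z : X, r m z → z = m := fun z hz =>
      hr.antisymm z m (hm (hr.trans y m z hym hz) hz) hz
    have hbound : ∀ x ∈ s, r x m := fun x hx => hr.trans x y m (hy x hx) hym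
    -- m ∈ s
    have hms : m ∈ s := by
      have h1 : insert m s ∈ T := by
        rw [hT]
        refine ⟨⟨m, Finset.mem_insert_self m s⟩, m, fun x hx => ?_⟩
        rcases Finset.mem_insert.1 hx with h | h
        · exact h ▸ hr.refl m
        · exact hbound x h
      have := hsmax _ h1 (Finset.subset_insert m s)
      rw [← this]; exact Finset.mem_insert_self m s
    refine ⟨m, hms, fun s' hs' hs'max hne hms' => ?_⟩
    have hs'K := hs'
    rw [hT] at hs'K
    obtain ⟨hs'ne, y', hy'⟩ := hs'K
    have hy'm : y' = m := hmmax y' (hy' m hms')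
    have hcup : s ∪ s' ∈ T := by
      rw [hT]
      refine ⟨⟨m, Finset.mem_union_left _ hms⟩, m, fun x hx => ?_⟩
      rcases Finset.mem_union.1 hx with h | h
      · exact hbound x h
      · exact hy'm ▸ hy' x h
    have h2 : s ∪ s' = s' := hs'max _ hcup Finset.subset_union_right
    have h3 : s ⊆ s' := h2 ▸ Finset.subset_union_left
    exact hne (hsmax s' hs' h3)
  · intro h
    choose! y hy1 hy2 using h
    set Mx : Finset X → Prop := fun s => s ∈ T ∧ ∀ s' ∈ T, s ⊆ s' → s' = s with hMx
    set r : X → X → Prop := fun a b => a = b ∨ ∃ s, Mx s ∧ b = y s ∧ a ∈ s with hrdef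
    have hys : ∀ s, Mx s → y s ∈ s := fun s hs => hy1 s hs.1 hs.2
    have hyuniq : ∀ s, Mx s → ∀ s', Mx s' → y s ∈ s' → s' = s := by
      intro s hs s' hs' hmem
      by_contra hne
      exact hy2 s hs.1 hs.2 s' hs'.1 hs'.2 hne hmem
    refine ⟨r, ?_, ?_⟩
    · refine { refl := fun a => Or.inl rfl, trans := ?_, antisymm := ?_ }
      · intro a b c hab hbc
        rcases hab with rfl | ⟨s, hs, rfl, has⟩
        · exact hbc
        · rcases hbc with rfl | ⟨s', hs', rfl, hbs'⟩
          · exact Or.inr ⟨s, hs, rfl, has⟩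
          · have h5 : s' = s := hyuniq s hs s' hs' hbs'
            exact Or.inr ⟨s, hs, congrArg y h5, has⟩
      · intro a b hab hba
        rcases hab with rfl | ⟨s, hs, rfl, has⟩
        · rfl
        · rcases hba with h | ⟨s', hs', ha, hys'⟩
          · exact h.symm
          · have h5 : s' = s := hyuniq s hs s' hs' hys'
            exact ha.trans (congrArg y h5)
    · ext t
      simp only [Set.mem_setOf_eq]
      constructor
      · intro ht
        obtain ⟨s, hsT, hts, hsmax⟩ := hmax_ext t ht
        exact ⟨h_ne t ht, y s, fun x hx => Or.inr ⟨s, ⟨hsT, hsmax⟩, rfl, hts hx⟩⟩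
      · rintro ⟨htne, z, hz⟩
        by_cases hcase : ∃ s, Mx s ∧ z = y s
        · obtain ⟨s0, hs0, rfl⟩ := hcase
          have hts0 : t ⊆ s0 := by
            intro x hx
            rcases hz x hx with rfl | ⟨s, hs, heq, hxs⟩
            · exact hys s0 hs0
            · have : s0 = s := hyuniq s hs s0 hs0 (heq ▸ hys s0 hs0)
              exact this ▸ hxs
          exact h_down s0 hs0.1 t hts0 htne
        · have : t ⊆ {z} := by
            intro x hx
            rcases hz x hx with rfl | ⟨s, hs, heq, hxs⟩
            · exact Finset.mem_singleton_self x
            · exact absurd ⟨s, hs, heq⟩ hcase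
          exact h_down {z} (h_vert z) t this htne
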